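/- Let x_1,…,x_t ∈ [−1,1]^d be covariates, w̄ ∈ ℝ^d, e_1,…,e_t ∈ ℝ, and set y_τ := x_τᵀ w̄ + e_τ for each τ. For λ > 0, let ŵ_t be any minimizer over w ∈ ℝ^d of ∑_{τ=1}^t (y_τ − x_τᵀ w)² + λ‖w‖₁. Define S̄ := { i ∈ {1,…,d} : w̄(i) ≠ 0 } and Σ_t := ∑_{τ=1}^t x_τ x_τᵀ. If λ_min(Σ_t) > 0 and ‖∑_{τ=1}^t e_τ x_τ‖_∞ ≤ λ/2, then ‖ŵ_t − w̄‖_{Σ_t} ≤ 2λ√|S̄| / √(λ_min(Σ_t)). -/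

import Mathlib

open Finset Matrix

lemma quad_lower {d : ℕ} {A : Matrix (Fin d) (Fin d) ℝ} (hA : A.IsHermitian) (v : Fin d → ℝ) :
    (⨅ i, hA.eigenvalues i) * (∑ i, v i ^ 2) ≤ v ⬝ᵥ (A *ᵥ v) := by
  classical
  set B := hA.eigenvectorBasis with hB
  have hinner : ∀ w u : EuclideanSpace ℝ (Fin d),
      (inner ℝ w u : ℝ) = (WithLp.equiv 2 (Fin d → ℝ) w) ⬝ᵥ (WithLp.equiv 2 (Fin d → ℝ) u) := by
    intro w u
    simp only [PiLp.inner_apply, RCLike.inner_apply, conj_trivial, dotProduct]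
    exact Finset.sum_congr rfl fun i _ => mul_comm _ _
  set v' : EuclideanSpace ℝ (Fin d) := (WithLp.equiv 2 (Fin d → ℝ)).symm v with hv'
  have hveq : WithLp.equiv 2 (Fin d → ℝ) v' = v := rfl
  set c : Fin d → ℝ := fun j => (WithLp.equiv 2 (Fin d → ℝ) (B j)) ⬝ᵥ v with hc
  have hAT : Aᵀ = A := by
    ext i j
    have := congrFun (congrFun hA.eq i) j
    simpa using this
  -- (b)
  have hb : ∑ i, v i ^ 2 = ∑ j, c j ^ 2 := by
    have h := B.sum_inner_mul_inner v' v'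
    have hvv : (inner ℝ v' v' : ℝ) = ∑ i, v i ^ 2 := by
      rw [hinner v' v', hveq]; simp [dotProduct, sq]
    rw [hvv] at h
    rw [← h]
    refine Finset.sum_congr rfl fun j _ => ?_
    have h1 : (inner ℝ (B j) v' : ℝ) = c j := by rw [hinner, hveq]
    have h2 : (inner ℝ v' (B j) : ℝ) = c j := by rw [real_inner_comm]; exact h1
    rw [h1, h2, sq]
  -- (a)
  set Av : EuclideanSpace ℝ (Fin d) := (WithLp.equiv 2 (Fin d → ℝ)).symm (A *ᵥ v) with hAvdef
  have hAveq : WithLp.equiv 2 (Fin d → ℝ) Av = A *ᵥ v := rfl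
  have hABj : ∀ j, (inner ℝ (B j) Av : ℝ) = hA.eigenvalues j * c j := by
    intro j
    rw [hinner, hAveq, dotProduct_mulVec, ← mulVec_transpose, hAT, WithLp.equiv_apply,
      hA.mulVec_eigenvectorBasis, smul_dotProduct, hc]
    rfl
  have hAv' : v ⬝ᵥ (A *ᵥ v) = ∑ j, hA.eigenvalues j * c j ^ 2 := by
    have h := B.sum_inner_mul_inner v' Av
    have h1 : (inner ℝ v' Av : ℝ) = v ⬝ᵥ (A *ᵥ v) := by rw [hinner, hveq, hAveq]
    rw [h1] at h
    rw [← h]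
    refine Finset.sum_congr rfl fun j _ => ?_
    have h2 : (inner ℝ v' (B j) : ℝ) = c j := by
      rw [real_inner_comm, hinner, hveq]
    rw [h2, hABj j]; ring
  rw [hAv', hb, Finset.mul_sum]
  refine Finset.sum_le_sum fun j _ => ?_
  have h4 : (⨅ i, hA.eigenvalues i) ≤ hA.eigenvalues j := ciInf_le (Finite.bddBelow_range _) j
  nlinarith [sq_nonneg (c j)]

/-- **Error bound for the Lasso estimator with unrestricted minimum eigenvalue** (Lemma E.4).
Let `x_1,…,x_t ∈ [−1,1]^d`, `y_τ = x_τᵀ w̄ + e_τ`, and let `ŵ_t` minimize the Lasso objective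
`∑_τ (y_τ − x_τᵀ w)² + λ‖w‖₁`. If the Gram matrix `Σ_t = ∑_τ x_τ x_τᵀ` has strictly positive
minimum eigenvalue and `‖∑_τ e_τ x_τ‖_∞ ≤ λ/2`, then
`‖ŵ_t − w̄‖_{Σ_t} ≤ 2λ√|S̄| / √(λ_min(Σ_t))`, where `S̄` is the support of `w̄`. -/
theorem lasso_error_bound
    {d t : ℕ} (x : Fin t → (Fin d → ℝ)) (hx : ∀ τ i, |x τ i| ≤ 1)
    (wbar : Fin d → ℝ) (e : Fin t → ℝ) (y : Fin t → ℝ)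
    (hy : ∀ τ, y τ = x τ ⬝ᵥ wbar + e τ)
    (lam : ℝ) (hlam : 0 < lam)
    (what : Fin d → ℝ)
    (hmin : ∀ w : Fin d → ℝ,
      (∑ τ, (y τ - x τ ⬝ᵥ what) ^ 2) + lam * ∑ i, |what i| ≤
        (∑ τ, (y τ - x τ ⬝ᵥ w) ^ 2) + lam * ∑ i, |w i|)
    (Sig : Matrix (Fin d) (Fin d) ℝ) (hSig : Sig = ∑ τ, Matrix.vecMulVec (x τ) (x τ))
    (hherm : Sig.IsHermitian)
    (hmineig : 0 < ⨅ i, hherm.eigenvalues i)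
    (hnoise : ∀ i : Fin d, |∑ τ, e τ * x τ i| ≤ lam / 2) :
    Real.sqrt ((what - wbar) ⬝ᵥ (Sig *ᵥ (what - wbar))) ≤
      2 * lam * Real.sqrt ((Finset.univ.filter fun i => wbar i ≠ 0).card) /
        Real.sqrt (⨅ i, hherm.eigenvalues i) := by
  classical
  set v : Fin d → ℝ := what - wbar with hv
  set m : ℝ := ⨅ i, hherm.eigenvalues i with hm
  set S : Finset (Fin d) := Finset.univ.filter (fun i => wbar i ≠ 0) with hS
  set Q : ℝ := v ⬝ᵥ (Sig *ᵥ v) with hQdef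
  have hvi : ∀ i, v i = what i - wbar i := fun i => rfl
  -- quadratic form identity
  have hQ : Q = ∑ τ, (x τ ⬝ᵥ v) ^ 2 := by
    rw [hQdef, hSig]
    simp only [mulVec, dotProduct, Matrix.sum_apply, vecMulVec_apply, sq,
      Finset.sum_mul, Finset.mul_sum]
    rw [Finset.sum_congr rfl fun (i : Fin d) _ =>
      Finset.sum_comm (f := fun (j : Fin d) (τ : Fin t) => v i * (x τ i * x τ j * v j))]
    rw [Finset.sum_comm]
    refine Finset.sum_congr rfl fun τ _ => ?_
    rw [Finset.sum_comm]
    exact Finset.sum_congr rfl fun j _ => Finset.sum_congr rfl fun i _ => by ring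
  have hQ0 : 0 ≤ Q := by rw [hQ]; exact Finset.sum_nonneg fun τ _ => sq_nonneg _
  -- basic inequality
  have hyw : ∀ τ, y τ - x τ ⬝ᵥ wbar = e τ := fun τ => by rw [hy]; ring
  have hyh : ∀ τ, y τ - x τ ⬝ᵥ what = e τ - x τ ⬝ᵥ v := by
    intro τ
    rw [hy τ, hv, dotProduct_sub]
    ring
  have hbasic : ∑ τ, (e τ - x τ ⬝ᵥ v) ^ 2 + lam * ∑ i, |what i| ≤
      ∑ τ, (e τ) ^ 2 + lam * ∑ i, |wbar i| := by
    have h := hmin wbar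
    have h1 : ∑ τ, (y τ - x τ ⬝ᵥ what) ^ 2 = ∑ τ, (e τ - x τ ⬝ᵥ v) ^ 2 :=
      Finset.sum_congr rfl fun τ _ => by rw [hyh τ]
    have h2 : ∑ τ, (y τ - x τ ⬝ᵥ wbar) ^ 2 = ∑ τ, (e τ) ^ 2 :=
      Finset.sum_congr rfl fun τ _ => by rw [hyw τ]
    rw [h1, h2] at h
    exact h
  have hexp : ∑ τ, (e τ - x τ ⬝ᵥ v) ^ 2 =
      ∑ τ, (e τ) ^ 2 - 2 * (∑ τ, e τ * (x τ ⬝ᵥ v)) + Q := by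
    rw [hQ, Finset.mul_sum, ← Finset.sum_sub_distrib, ← Finset.sum_add_distrib]
    exact Finset.sum_congr rfl fun τ _ => by ring
  have hkey : Q ≤ 2 * (∑ τ, e τ * (x τ ⬝ᵥ v)) +
      lam * (∑ i, |wbar i|) - lam * (∑ i, |what i|) := by
    rw [hexp] at hbasic; linarith
  -- swap sums & noise bound
  have hswap : ∑ τ, e τ * (x τ ⬝ᵥ v) = ∑ i, (∑ τ, e τ * x τ i) * v i := by
    simp only [dotProduct, Finset.mul_sum, Finset.sum_mul]
    rw [Finset.sum_comm]
    exact Finset.sum_congr rfl fun i _ => Finset.sum_congr rfl fun τ _ => by ring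
  have hE : ∑ τ, e τ * (x τ ⬝ᵥ v) ≤ ∑ i, (lam / 2) * |v i| := by
    rw [hswap]
    refine Finset.sum_le_sum fun i _ => ?_
    calc (∑ τ, e τ * x τ i) * v i ≤ |(∑ τ, e τ * x τ i) * v i| := le_abs_self _
      _ = |∑ τ, e τ * x τ i| * |v i| := abs_mul _ _
      _ ≤ (lam / 2) * |v i| := mul_le_mul_of_nonneg_right (hnoise i) (abs_nonneg _)
  -- support bound
  have hsupp : ∑ i, |v i| + ((∑ i, |wbar i|) - ∑ i, |what i|) ≤ 2 * ∑ i ∈ S, |v i| := by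
    have h2 : ∑ i ∈ S, |v i| = ∑ i, if wbar i ≠ 0 then |v i| else 0 := Finset.sum_filter _ _
    rw [h2, Finset.mul_sum, ← Finset.sum_sub_distrib, ← Finset.sum_add_distrib]
    refine Finset.sum_le_sum fun i _ => ?_
    by_cases hwi : wbar i = 0
    · simp only [hwi, ne_eq, not_true_eq_false, if_false, hvi i, hwi, sub_zero, abs_zero]
      simp [hwi]
    · simp only [ne_eq, hwi, not_false_eq_true, if_true]
      have := abs_sub_abs_le_abs_sub (wbar i) (what i)
      rw [abs_sub_comm] at this
      rw [hvi i]
      linarith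
  have hQle : Q ≤ 2 * lam * ∑ i ∈ S, |v i| := by
    have hl : lam * (∑ i, |v i| + ((∑ i, |wbar i|) - ∑ i, |what i|)) ≤
        lam * (2 * ∑ i ∈ S, |v i|) := mul_le_mul_of_nonneg_left hsupp hlam.le
    have h3 : ∑ i, (lam / 2) * |v i| = (lam / 2) * ∑ i, |v i| := by rw [Finset.mul_sum]
    rw [h3] at hE
    nlinarith [hkey, hE, hl]
  -- Cauchy-Schwarz
  have hcs : (∑ i ∈ S, |v i|) ^ 2 ≤ (S.card : ℝ) * ∑ i, v i ^ 2 := by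
    have h1 := Finset.sum_mul_sq_le_sq_mul_sq S (fun _ => (1 : ℝ)) (fun i => |v i|)
    simp only [one_mul, one_pow, sq_abs] at h1
    have h2 : ∑ i ∈ S, (1 : ℝ) = (S.card : ℝ) := by simp
    rw [h2] at h1
    refine h1.trans (mul_le_mul_of_nonneg_left ?_ (Nat.cast_nonneg _))
    exact Finset.sum_le_sum_of_subset_of_nonneg (Finset.subset_univ S)
      (fun i _ _ => sq_nonneg _)
  -- eigenvalue bound (quad_lower)
  have heig : m * ∑ i, v i ^ 2 ≤ Q := quad_lower hherm v
  -- assemble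
  have hsv0 : 0 ≤ ∑ i ∈ S, |v i| := Finset.sum_nonneg fun i _ => abs_nonneg _
  have hsq0 : 0 ≤ ∑ i, v i ^ 2 := Finset.sum_nonneg fun i _ => sq_nonneg _
  have hsv : ∑ i ∈ S, |v i| ≤ Real.sqrt (S.card : ℝ) * Real.sqrt (∑ i, v i ^ 2) := by
    rw [← Real.sqrt_mul (Nat.cast_nonneg _)]
    calc ∑ i ∈ S, |v i| = Real.sqrt ((∑ i ∈ S, |v i|) ^ 2) := (Real.sqrt_sq hsv0).symm
      _ ≤ Real.sqrt ((S.card : ℝ) * ∑ i, v i ^ 2) := Real.sqrt_le_sqrt hcs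
  have hrm : 0 < Real.sqrt m := Real.sqrt_pos.mpr hmineig
  have hsq : Real.sqrt (∑ i, v i ^ 2) ≤ Real.sqrt Q / Real.sqrt m := by
    rw [← Real.sqrt_div hQ0]
    refine Real.sqrt_le_sqrt ?_
    rw [le_div_iff₀ hmineig]
    linarith [heig]
  set a : ℝ := Real.sqrt Q with ha
  set c : ℝ := Real.sqrt ((S.card : ℝ)) with hcdef
  have ha0 : 0 ≤ a := Real.sqrt_nonneg _
  have hc0 : 0 ≤ c := Real.sqrt_nonneg _
  have haa : a * a = Q := Real.mul_self_sqrt hQ0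
  have hchain : a * a ≤ 2 * lam * (c * (a / Real.sqrt m)) := by
    rw [haa]
    calc Q ≤ 2 * lam * ∑ i ∈ S, |v i| := hQle
      _ ≤ 2 * lam * (c * Real.sqrt (∑ i, v i ^ 2)) := by
          refine mul_le_mul_of_nonneg_left ?_ (by linarith)
          exact hsv
      _ ≤ 2 * lam * (c * (a / Real.sqrt m)) := by
          refine mul_le_mul_of_nonneg_left (mul_le_mul_of_nonneg_left hsq hc0) (by linarith)
  show a ≤ 2 * lam * c / Real.sqrt m
  rcases eq_or_lt_of_le ha0 with h | h
  · rw [← h]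
    positivity
  · rw [le_div_iff₀ hrm]
    have hchain' : a * a * Real.sqrt m ≤ 2 * lam * c * a := by
      have := mul_le_mul_of_nonneg_right hchain hrm.le
      calc a * a * Real.sqrt m ≤ 2 * lam * (c * (a / Real.sqrt m)) * Real.sqrt m := this
        _ = 2 * lam * c * a := by field_simp
    nlinarith [hchain', h]
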